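/- Let B₀ ∈ ℝ^{m×m} be symmetric negative semidefinite with eigenvalues 0 = λ₁⁰ = … = λ_k⁰ > λ_{k+1}⁰ ≥ … ≥ λ_m⁰, where its kernel has dimension k, and let B₁(t) be a continuous symmetric 1-periodic matrix. Let {η₁,…,η_k} be an orthonormal basis of ker B₀ and define G(t) ∈ ℝ^{k×k} by G(t)_{ij} = η_i^T B₁(t) η_j. If ∫₀¹ λ_max(G(t)) dt < 0, then there exists g₀ > 0 such that for all g ≥ g₀, the largest eigenvalue λ₁(t) of gB₀ + B₁(t) satisfies ∫₀¹ λ₁(t) dt < 0. -/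

import Mathlib

open Matrix

def nB {n p : ℕ} (M : Matrix (Fin n) (Fin p) ℝ) : ℝ := ∑ i, ∑ j, |M i j|

lemma nB_nonneg {n p : ℕ} (M : Matrix (Fin n) (Fin p) ℝ) : 0 ≤ nB M :=
  Finset.sum_nonneg fun _ _ => Finset.sum_nonneg fun _ _ => abs_nonneg _

lemma dot_bound {n p : ℕ} (M : Matrix (Fin n) (Fin p) ℝ) (u : Fin n → ℝ) (v : Fin p → ℝ) :
    |u ⬝ᵥ M.mulVec v| ≤ nB M * (((u ⬝ᵥ u) + (v ⬝ᵥ v)) / 2) := by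
  have huv : ∀ (i : Fin n) (j : Fin p), |u i| * |v j| ≤ ((u ⬝ᵥ u) + (v ⬝ᵥ v)) / 2 := by
    intro i j
    have h1 : u i ^ 2 ≤ u ⬝ᵥ u := by
      have : u ⬝ᵥ u = ∑ a, u a ^ 2 := by
        simp [dotProduct, sq]
      rw [this]
      exact Finset.single_le_sum (fun a _ => sq_nonneg (u a)) (Finset.mem_univ i)
    have h2 : v j ^ 2 ≤ v ⬝ᵥ v := by
      have : v ⬝ᵥ v = ∑ a, v a ^ 2 := by
        simp [dotProduct, sq]
      rw [this]
      exact Finset.single_le_sum (fun a _ => sq_nonneg (v a)) (Finset.mem_univ j)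
    nlinarith [sq_nonneg (|u i| - |v j|), sq_abs (u i), sq_abs (v j)]
  have hexp : u ⬝ᵥ M.mulVec v = ∑ i, ∑ j, u i * M i j * v j := by
    simp [dotProduct, Matrix.mulVec, Finset.mul_sum, mul_assoc]
  rw [hexp, nB, Finset.sum_mul]
  calc |∑ i, ∑ j, u i * M i j * v j| ≤ ∑ i, |∑ j, u i * M i j * v j| :=
        Finset.abs_sum_le_sum_abs _ _
    _ ≤ ∑ i, ∑ j, |u i * M i j * v j| :=
        Finset.sum_le_sum fun i _ => Finset.abs_sum_le_sum_abs _ _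
    _ ≤ ∑ i, (∑ j, |M i j|) * (((u ⬝ᵥ u) + (v ⬝ᵥ v)) / 2) := by
        refine Finset.sum_le_sum fun i _ => ?_
        rw [Finset.sum_mul]
        refine Finset.sum_le_sum fun j _ => ?_
        rw [abs_mul, abs_mul]
        calc |u i| * |M i j| * |v j| = |M i j| * (|u i| * |v j|) := by ring
          _ ≤ |M i j| * (((u ⬝ᵥ u) + (v ⬝ᵥ v)) / 2) :=
              mul_le_mul_of_nonneg_left (huv i j) (abs_nonneg _)


lemma dot_self_nonneg {n : ℕ} (x : Fin n → ℝ) : 0 ≤ x ⬝ᵥ x := by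
  have : x ⬝ᵥ x = ∑ i, x i ^ 2 := by simp [dotProduct, sq]
  rw [this]
  exact Finset.sum_nonneg fun i _ => sq_nonneg _

lemma dot_self_pos {n : ℕ} (x : Fin n → ℝ) (hx : x ≠ 0) : 0 < x ⬝ᵥ x := by
  rcases lt_or_eq_of_le (dot_self_nonneg x) with h | h
  · exact h
  · exact absurd (dotProduct_self_eq_zero.mp h.symm) hx

lemma symdot {n : ℕ} (M : Matrix (Fin n) (Fin n) ℝ) (hM : Mᵀ = M) (u v : Fin n → ℝ) :
    u ⬝ᵥ M.mulVec v = v ⬝ᵥ M.mulVec u := by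
  rw [Matrix.dotProduct_mulVec, ← Matrix.mulVec_transpose, hM, dotProduct_comm]


theorem rayleigh_le {n : ℕ} (M : Matrix (Fin n) (Fin n) ℝ) (hsym : Mᵀ = M) (lam : ℝ)
    (hlam : IsGreatest {r : ℝ | ∃ x : Fin n → ℝ, x ≠ 0 ∧ M.mulVec x = r • x} lam) :
    ∀ x : Fin n → ℝ, x ⬝ᵥ M.mulVec x ≤ lam * (x ⬝ᵥ x) := by
  intro x
  have hM : M.IsHermitian := by
    rw [Matrix.IsHermitian, Matrix.conjTranspose_eq_transpose_of_trivial, hsym]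
  set b := hM.eigenvectorBasis with hb
  set μ := hM.eigenvalues with hμ
  have hev : ∀ i, M.mulVec ⇑(b i) = μ i • ⇑(b i) := fun i => hM.mulVec_eigenvectorBasis i
  have hle : ∀ i, μ i ≤ lam := by
    intro i
    apply hlam.2
    refine ⟨⇑(b i), ?_, hev i⟩
    intro h
    have hz : b i = 0 := (WithLp.equiv 2 _).injective (by simp [h])
    have : ‖b i‖ = 1 := b.orthonormal.1 i
    rw [hz, norm_zero] at this
    exact zero_ne_one this
  have hinner : ∀ u v : EuclideanSpace ℝ (Fin n),
      inner ℝ u v = (WithLp.equiv 2 _) u ⬝ᵥ (WithLp.equiv 2 _) v := by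
    intro u v
    simp [PiLp.inner_apply, dotProduct, RCLike.inner_apply, mul_comm]
  have hterm : ∀ i, (⇑(b i) : Fin n → ℝ) ⬝ᵥ (M.mulVec x) = μ i * (⇑(b i) ⬝ᵥ x) := by
    intro i
    rw [Matrix.dotProduct_mulVec, ← Matrix.mulVec_transpose, hsym, hev i, smul_dotProduct, smul_eq_mul]
  have parseval := b.sum_inner_mul_inner ((WithLp.equiv 2 _).symm x) ((WithLp.equiv 2 _).symm (M.mulVec x))
  have parseval2 := b.sum_inner_mul_inner ((WithLp.equiv 2 _).symm x) ((WithLp.equiv 2 _).symm x)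
  simp only [hinner, Equiv.apply_symm_apply, WithLp.equiv_apply, WithLp.equiv_symm_apply, WithLp.ofLp_toLp] at parseval parseval2
  have key : x ⬝ᵥ M.mulVec x = ∑ i, μ i * (⇑(b i) ⬝ᵥ x)^2 := by
    rw [← parseval]
    refine Finset.sum_congr rfl fun i _ => ?_
    rw [hterm i, dotProduct_comm x]
    ring
  have key2 : x ⬝ᵥ x = ∑ i, (⇑(b i) ⬝ᵥ x)^2 := by
    rw [← parseval2]
    refine Finset.sum_congr rfl fun i _ => ?_
    rw [dotProduct_comm x]
    ring
  rw [key, key2, Finset.mul_sum]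
  exact Finset.sum_le_sum fun i _ => mul_le_mul_of_nonneg_right (hle i) (sq_nonneg _)

lemma lam_le {n : ℕ} (A A' : Matrix (Fin n) (Fin n) ℝ) (hA' : A'ᵀ = A') (l l' : ℝ)
    (hl : IsGreatest {r : ℝ | ∃ x : Fin n → ℝ, x ≠ 0 ∧ A.mulVec x = r • x} l)
    (hl' : IsGreatest {r : ℝ | ∃ x : Fin n → ℝ, x ≠ 0 ∧ A'.mulVec x = r • x} l') :
    l ≤ l' + nB (A - A') := by
  obtain ⟨x, hx0, hxe⟩ := hl.1
  have ha : 0 < x ⬝ᵥ x := dot_self_pos x hx0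
  have key : l * (x ⬝ᵥ x) ≤ (l' + nB (A - A')) * (x ⬝ᵥ x) := by
    have h1 : l * (x ⬝ᵥ x) = x ⬝ᵥ A.mulVec x := by
      rw [hxe, dotProduct_smul, smul_eq_mul]
    have h2 : x ⬝ᵥ A.mulVec x = x ⬝ᵥ A'.mulVec x + x ⬝ᵥ (A - A').mulVec x := by
      rw [Matrix.sub_mulVec, dotProduct_sub]
      ring
    have h3 : x ⬝ᵥ A'.mulVec x ≤ l' * (x ⬝ᵥ x) := rayleigh_le A' hA' l' hl' x
    have h4 : x ⬝ᵥ (A - A').mulVec x ≤ nB (A - A') * (x ⬝ᵥ x) := by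
      have := dot_bound (A - A') x x
      have h5 := le_of_abs_le this
      calc x ⬝ᵥ (A - A').mulVec x ≤ nB (A - A') * (((x ⬝ᵥ x) + (x ⬝ᵥ x)) / 2) := h5
        _ = nB (A - A') * (x ⬝ᵥ x) := by ring
    rw [h1, h2]
    nlinarith
  exact le_of_mul_le_mul_right key ha

lemma psd0 {n : ℕ} (M : Matrix (Fin n) (Fin n) ℝ) (hsym : Mᵀ = M)
    (hneg : ∀ x : Fin n → ℝ, x ⬝ᵥ M.mulVec x ≤ 0) (z : Fin n → ℝ)
    (hz : z ⬝ᵥ M.mulVec z = 0) : M.mulVec z = 0 := by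
  have hw : ∀ w : Fin n → ℝ, w ⬝ᵥ M.mulVec z = 0 := by
    intro w
    set a := w ⬝ᵥ M.mulVec z with hadef
    set b := -(w ⬝ᵥ M.mulVec w) with hbdef
    have hb : 0 ≤ b := by rw [hbdef]; linarith [hneg w]
    set t := a / (b + 1) with htdef
    have hb1 : (0:ℝ) < b + 1 := by linarith
    have ht : t * (b + 1) = a := div_mul_cancel₀ a (ne_of_gt hb1)
    have hq := hneg (z + t • w)
    have expand : (z + t • w) ⬝ᵥ M.mulVec (z + t • w)
        = z ⬝ᵥ M.mulVec z + 2 * t * a + t ^ 2 * (-b) := by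
      rw [Matrix.mulVec_add, Matrix.mulVec_smul]
      rw [dotProduct_add, add_dotProduct, add_dotProduct]
      rw [smul_dotProduct, smul_dotProduct, dotProduct_smul,
        dotProduct_smul]
      rw [symdot M hsym z w]
      rw [hadef, hbdef]
      simp [smul_eq_mul]
      ring
    rw [expand, hz] at hq
    have hq' : 2 * t * (t * (b + 1)) + t ^ 2 * (-b) ≤ 0 := by rw [ht]; linarith
    have ht0 : t ^ 2 ≤ 0 := by nlinarith [sq_nonneg t, mul_nonneg hb (sq_nonneg t)]
    have ht0' : t = 0 := by
      have h2 : t ^ 2 = 0 := le_antisymm ht0 (sq_nonneg t)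
      exact sq_eq_zero_iff.mp (by rwa [sq] at h2 ⊢)
    rw [← ht, ht0', zero_mul]
  have := hw (M.mulVec z)
  exact dotProduct_self_eq_zero.mp this


lemma nB_sub_comm {n p : ℕ} (A B : Matrix (Fin n) (Fin p) ℝ) : nB (A - B) = nB (B - A) := by
  unfold nB
  refine Finset.sum_congr rfl fun i _ => Finset.sum_congr rfl fun j _ => ?_
  simp [Matrix.sub_apply, abs_sub_comm]

lemma nB_cont {n p : ℕ} {F : ℝ → Matrix (Fin n) (Fin p) ℝ} (hF : Continuous F) :
    Continuous fun t => nB (F t) := by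
  unfold nB
  exact continuous_finset_sum _ fun i _ => continuous_finset_sum _ fun j _ =>
    (hF.matrix_elem i j).abs

lemma dot_cont {n : ℕ} (M : Matrix (Fin n) (Fin n) ℝ) :
    Continuous fun z : Fin n → ℝ => z ⬝ᵥ M.mulVec z := by
  have : (fun z : Fin n → ℝ => z ⬝ᵥ M.mulVec z)
      = fun z => ∑ i, z i * ∑ j, M i j * z j := by
    funext z
    simp [dotProduct, Matrix.mulVec]
  rw [this]
  exact continuous_finset_sum _ fun i _ => (continuous_apply i).mul
    (continuous_finset_sum _ fun j _ => continuous_const.mul (continuous_apply j))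

lemma gap {m k : ℕ} (B₀ : Matrix (Fin m) (Fin m) ℝ) (hB₀sym : B₀ᵀ = B₀)
    (hB₀neg : ∀ x : Fin m → ℝ, x ⬝ᵥ B₀.mulVec x ≤ 0)
    (η : Fin k → (Fin m → ℝ))
    (hspan : Submodule.span ℝ (Set.range η) = LinearMap.ker B₀.mulVecLin) :
    ∃ μ > (0:ℝ), ∀ z : Fin m → ℝ, (∀ i, η i ⬝ᵥ z = 0) →
      z ⬝ᵥ B₀.mulVec z ≤ -μ * (z ⬝ᵥ z) := by
  have hker0 : ∀ z : Fin m → ℝ, (∀ i, η i ⬝ᵥ z = 0) → B₀.mulVec z = 0 → z = 0 := by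
    intro z hperp hz
    have hz' : z ∈ Submodule.span ℝ (Set.range η) := by
      rw [hspan]
      simpa [LinearMap.mem_ker, Matrix.mulVecLin_apply] using hz
    have key : ∀ w ∈ Submodule.span ℝ (Set.range η), w ⬝ᵥ z = 0 := by
      intro w hw
      induction hw using Submodule.span_induction with
      | mem x hx => obtain ⟨i, rfl⟩ := hx; exact hperp i
      | zero => simp
      | add x y hx hy ihx ihy => rw [add_dotProduct, ihx, ihy, add_zero]
      | smul c x hx ih => rw [smul_dotProduct, ih, smul_zero]
    exact dotProduct_self_eq_zero.mp (key z hz')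
  have scale : ∀ z : Fin m → ℝ, z ≠ 0 → (∀ i, η i ⬝ᵥ z = 0) →
      ∃ w : Fin m → ℝ, (w ⬝ᵥ w = 1 ∧ ∀ i, η i ⬝ᵥ w = 0) ∧
        z ⬝ᵥ B₀.mulVec z = (z ⬝ᵥ z) * (w ⬝ᵥ B₀.mulVec w) := by
    intro z hz hperp
    have hz2 : 0 < z ⬝ᵥ z := dot_self_pos z hz
    set s := Real.sqrt (z ⬝ᵥ z) with hsdef
    have hs : 0 < s := Real.sqrt_pos.mpr hz2
    have hs2 : s ^ 2 = z ⬝ᵥ z := Real.sq_sqrt hz2.le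
    refine ⟨s⁻¹ • z, ⟨?_, ?_⟩, ?_⟩
    · rw [smul_dotProduct, dotProduct_smul, smul_eq_mul, smul_eq_mul]
      rw [← hs2]
      field_simp
    · intro i
      rw [dotProduct_smul, hperp i, smul_zero]
    · rw [Matrix.mulVec_smul, smul_dotProduct, dotProduct_smul,
        smul_eq_mul, smul_eq_mul, ← hs2]
      field_simp
  set S : Set (Fin m → ℝ) := {z | z ⬝ᵥ z = 1 ∧ ∀ i, η i ⬝ᵥ z = 0} with hSdef
  by_cases hS : S.Nonempty
  · have hSeq : S = {z : Fin m → ℝ | z ⬝ᵥ z = 1} ∩ ⋂ i, {z | η i ⬝ᵥ z = 0} := by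
      ext z
      simp [hSdef, Set.mem_iInter]
    have hdotcont : Continuous fun z : Fin m → ℝ => z ⬝ᵥ z := by
      have : (fun z : Fin m → ℝ => z ⬝ᵥ z) = fun z => z ⬝ᵥ (1 : Matrix (Fin m) (Fin m) ℝ).mulVec z := by
        funext z; rw [Matrix.one_mulVec]
      rw [this]; exact dot_cont 1
    have hSclosed : IsClosed S := by
      rw [hSeq]
      refine (isClosed_eq hdotcont continuous_const).inter (isClosed_iInter fun i => ?_)
      have : Continuous fun z : Fin m → ℝ => η i ⬝ᵥ z := by
        have : (fun z : Fin m → ℝ => η i ⬝ᵥ z) = fun z => ∑ a, η i a * z a := by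
          funext z; simp [dotProduct]
        rw [this]
        exact continuous_finset_sum _ fun a _ => continuous_const.mul (continuous_apply a)
      exact isClosed_eq this continuous_const
    have hSsub : S ⊆ Metric.closedBall 0 1 := by
      rintro z ⟨hz1, -⟩
      rw [Metric.mem_closedBall, dist_zero_right]
      rw [pi_norm_le_iff_of_nonneg zero_le_one]
      intro i
      rw [Real.norm_eq_abs]
      have hsq : z i ^ 2 ≤ 1 := by
        have h : z ⬝ᵥ z = ∑ a, z a ^ 2 := by simp [dotProduct, sq]
        have := Finset.single_le_sum (f := fun a => z a ^ 2)
          (fun a _ => sq_nonneg (z a)) (Finset.mem_univ i)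
        rw [← h, hz1] at this
        exact this
      nlinarith [sq_abs (z i), abs_nonneg (z i)]
    have hScompact : IsCompact S :=
      (isCompact_closedBall (0 : Fin m → ℝ) 1).of_isClosed_subset hSclosed hSsub
    obtain ⟨z₀, hz₀S, hmax⟩ := hScompact.exists_isMaxOn hS (dot_cont B₀).continuousOn
    set μ := -(z₀ ⬝ᵥ B₀.mulVec z₀) with hμdef
    have hμpos : 0 < μ := by
      rcases lt_or_eq_of_le (hB₀neg z₀) with h | h
      · rw [hμdef]; linarith
      · exfalso
        have hz₀0 : z₀ = 0 := hker0 z₀ hz₀S.2 (psd0 B₀ hB₀sym hB₀neg z₀ h)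
        have := hz₀S.1
        rw [hz₀0] at this
        simp [zero_dotProduct] at this
    refine ⟨μ, hμpos, ?_⟩
    intro z hperp
    by_cases hz : z = 0
    · subst hz
      simp
    · obtain ⟨w, ⟨hw1, hwperp⟩, heq⟩ := scale z hz hperp
      have hwS : w ∈ S := ⟨hw1, hwperp⟩
      have hwle : w ⬝ᵥ B₀.mulVec w ≤ -μ := by
        have := hmax hwS
        rw [hμdef]; simpa using this
      have hz2 : 0 < z ⬝ᵥ z := dot_self_pos z hz
      rw [heq]
      nlinarith
  · refine ⟨1, one_pos, ?_⟩
    intro z hperp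
    by_cases hz : z = 0
    · subst hz
      simp
    · exfalso
      obtain ⟨w, ⟨hw1, hwperp⟩, -⟩ := scale z hz hperp
      exact hS ⟨w, hw1, hwperp⟩
lemma dotProduct_sum' {n : ℕ} {ι : Type*} (s : Finset ι) (u : Fin n → ℝ) (f : ι → Fin n → ℝ) :
    u ⬝ᵥ (∑ i ∈ s, f i) = ∑ i ∈ s, u ⬝ᵥ f i := by
  simp only [dotProduct, Finset.sum_apply, Finset.mul_sum]
  exact Finset.sum_comm

lemma sum_dotProduct' {n : ℕ} {ι : Type*} (s : Finset ι) (u : Fin n → ℝ) (f : ι → Fin n → ℝ) :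
    (∑ i ∈ s, f i) ⬝ᵥ u = ∑ i ∈ s, f i ⬝ᵥ u := by
  rw [dotProduct_comm, dotProduct_sum']
  exact Finset.sum_congr rfl fun i _ => dotProduct_comm _ _

lemma mulVec_sum' {n p : ℕ} {ι : Type*} (s : Finset ι) (M : Matrix (Fin n) (Fin p) ℝ)
    (f : ι → Fin p → ℝ) : M.mulVec (∑ i ∈ s, f i) = ∑ i ∈ s, M.mulVec (f i) := by
  have h := map_sum M.mulVecLin f s
  simp only [Matrix.mulVecLin_apply] at h
  exact h

set_option maxHeartbeats 1000000 in
theorem stmt13 {m k : ℕ}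
    (B₀ : Matrix (Fin m) (Fin m) ℝ) (hB₀sym : B₀ᵀ = B₀)
    (hB₀neg : ∀ x : Fin m → ℝ, x ⬝ᵥ B₀.mulVec x ≤ 0)
    (η : Fin k → (Fin m → ℝ))
    (hortho : ∀ i j, η i ⬝ᵥ η j = if i = j then (1:ℝ) else 0)
    (hker : ∀ i, B₀.mulVec (η i) = 0)
    (hspan : Submodule.span ℝ (Set.range η) = LinearMap.ker B₀.mulVecLin)
    (B₁ : ℝ → Matrix (Fin m) (Fin m) ℝ) (hB₁cont : Continuous B₁)
    (hB₁sym : ∀ t, (B₁ t)ᵀ = B₁ t) (hB₁per : ∀ t, B₁ (t + 1) = B₁ t)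
    (lamG : ℝ → ℝ)
    (hlamG : ∀ t, IsGreatest {r : ℝ | ∃ y : Fin k → ℝ, y ≠ 0 ∧
      (Matrix.of fun i j => η i ⬝ᵥ (B₁ t).mulVec (η j)).mulVec y = r • y} (lamG t))
    (hint : (∫ t in (0:ℝ)..1, lamG t) < 0)
    (lam1 : ℝ → ℝ → ℝ)
    (hlam1 : ∀ g t, IsGreatest {r : ℝ | ∃ x : Fin m → ℝ, x ≠ 0 ∧
      (g • B₀ + B₁ t).mulVec x = r • x} (lam1 g t)) :
    ∃ g₀ > (0:ℝ), ∀ g : ℝ, g₀ ≤ g → (∫ t in (0:ℝ)..1, lam1 g t) < 0 := by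
  classical
  set G : ℝ → Matrix (Fin k) (Fin k) ℝ :=
    fun t => Matrix.of fun i j => η i ⬝ᵥ (B₁ t).mulVec (η j) with hGdef
  have hGsym : ∀ t, (G t)ᵀ = G t := by
    intro t
    ext i j
    simp only [hGdef, Matrix.transpose_apply, Matrix.of_apply]
    exact symdot (B₁ t) (hB₁sym t) (η j) (η i)
  obtain ⟨μ, hμpos, hgap⟩ := gap B₀ hB₀sym hB₀neg η hspan
  -- uniform bound N on nB (B₁ t) for t ∈ [0,1]
  have hnBcont : Continuous fun t => nB (B₁ t) := nB_cont hB₁cont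
  obtain ⟨ts, -, hts⟩ := (isCompact_Icc (a := (0:ℝ)) (b := 1)).exists_isMaxOn
    ⟨0, by norm_num⟩ hnBcont.continuousOn
  set N := nB (B₁ ts) with hNdef
  have hN0 : 0 ≤ N := nB_nonneg _
  have hNt : ∀ t ∈ Set.Icc (0:ℝ) 1, nB (B₁ t) ≤ N := fun t ht => hts ht
  set L := (k:ℝ)^2 * N with hLdef
  have hL0 : 0 ≤ L := by positivity
  -- lower bound on lamG
  have hGbound : ∀ t ∈ Set.Icc (0:ℝ) 1, nB (G t) ≤ L := by
    intro t ht
    have hentry : ∀ i j, |G t i j| ≤ N := by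
      intro i j
      have h1 := dot_bound (B₁ t) (η i) (η j)
      have h2 : ((η i ⬝ᵥ η i) + (η j ⬝ᵥ η j)) / 2 = 1 := by
        rw [hortho i i, hortho j j]
        simp
      rw [h2, mul_one] at h1
      calc |G t i j| = |η i ⬝ᵥ (B₁ t).mulVec (η j)| := rfl
        _ ≤ nB (B₁ t) := h1
        _ ≤ N := hNt t ht
    calc nB (G t) = ∑ i, ∑ j, |G t i j| := rfl
      _ ≤ ∑ _i : Fin k, ∑ _j : Fin k, N :=
          Finset.sum_le_sum fun i _ => Finset.sum_le_sum fun j _ => hentry i j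
      _ = (k:ℝ)^2 * N := by
          simp [Finset.sum_const]
          ring
  have hlamGlb : ∀ t ∈ Set.Icc (0:ℝ) 1, -L ≤ lamG t := by
    intro t ht
    obtain ⟨c, hc0, hce⟩ := (hlamG t).1
    have hcc : 0 < c ⬝ᵥ c := dot_self_pos c hc0
    have h1 : c ⬝ᵥ (G t).mulVec c = lamG t * (c ⬝ᵥ c) := by
      rw [show (Matrix.of fun i j => η i ⬝ᵥ (B₁ t).mulVec (η j)) = G t from rfl] at hce
      rw [hce, dotProduct_smul, smul_eq_mul]
    have h2 := dot_bound (G t) c c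
    have h3 : -(nB (G t)) * (c ⬝ᵥ c) ≤ c ⬝ᵥ (G t).mulVec c := by
      have := neg_abs_le (c ⬝ᵥ (G t).mulVec c)
      nlinarith
    have h4 : -L * (c ⬝ᵥ c) ≤ lamG t * (c ⬝ᵥ c) := by
      have h5 := hGbound t ht
      nlinarith
    exact le_of_mul_le_mul_right h4 hcc
  have hintG : IntervalIntegrable lamG MeasureTheory.volume 0 1 := by
    by_contra h
    rw [intervalIntegral.integral_undef h] at hint
    exact lt_irrefl 0 hint
  -- epsilon and tau
  set I := ∫ t in (0:ℝ)..1, lamG t with hIdef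
  set ε := -I / 2 with hεdef
  have hεpos : 0 < ε := by rw [hεdef]; linarith
  set τ := N / ε + 1 with hτdef
  have hτpos : 0 < τ := by positivity
  have hNτ : N / τ ≤ ε := by
    rw [div_le_iff₀ hτpos, hτdef]
    have : ε * (N / ε) = N := by field_simp
    nlinarith
  refine ⟨(L + N + N * τ) / μ + 1, by positivity, ?_⟩
  intro g hg
  have hgpos : 0 < g := lt_of_lt_of_le (by positivity) hg
  have hgμ : L + N + N * τ ≤ g * μ := by
    have h1 : ((L + N + N * τ) / μ + 1) * μ ≤ g * μ :=
      mul_le_mul_of_nonneg_right hg hμpos.le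
    rw [add_mul, div_mul_cancel₀ _ (ne_of_gt hμpos), one_mul] at h1
    linarith [hμpos]
  -- pointwise bound
  have hpt : ∀ t ∈ Set.Icc (0:ℝ) 1, lam1 g t ≤ lamG t + ε := by
    intro t ht
    obtain ⟨x, hx0, hxe⟩ := (hlam1 g t).1
    have ha : 0 < x ⬝ᵥ x := dot_self_pos x hx0
    set c : Fin k → ℝ := fun i => η i ⬝ᵥ x with hcdef
    set y : Fin m → ℝ := ∑ i, c i • η i with hydef
    set z : Fin m → ℝ := x - y with hzdef
    have hxyz' : x = y + z := by rw [hzdef]; abel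
    have hyi : ∀ i, η i ⬝ᵥ y = c i := by
      intro i
      rw [hydef, dotProduct_sum']
      have : ∀ j, η i ⬝ᵥ (c j • η j) = c j * (if i = j then (1:ℝ) else 0) := by
        intro j
        rw [dotProduct_smul, hortho i j, smul_eq_mul]
      simp only [this, mul_ite, mul_one, mul_zero]
      simp
    have hzi : ∀ i, η i ⬝ᵥ z = 0 := by
      intro i
      rw [hzdef, dotProduct_sub, hyi, hcdef, sub_self]
    have hyz : y ⬝ᵥ z = 0 := by
      rw [hydef, sum_dotProduct']
      refine Finset.sum_eq_zero fun i _ => ?_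
      rw [smul_dotProduct, hzi, smul_zero]
    have hY0 : 0 ≤ y ⬝ᵥ y := dot_self_nonneg y
    have hZ0 : 0 ≤ z ⬝ᵥ z := dot_self_nonneg z
    have hYc : y ⬝ᵥ y = c ⬝ᵥ c := by
      nth_rewrite 1 [hydef]
      rw [sum_dotProduct']
      simp only [smul_dotProduct, hyi, smul_eq_mul]
      simp [dotProduct]
    have hxyz : x ⬝ᵥ x = y ⬝ᵥ y + z ⬝ᵥ z := by
      nth_rewrite 1 [hxyz']
      nth_rewrite 1 [hxyz']
      rw [add_dotProduct, dotProduct_add, dotProduct_add,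
        hyz, dotProduct_comm z y, hyz]
      ring
    have hB0y : B₀.mulVec y = 0 := by
      rw [hydef, mulVec_sum']
      refine Finset.sum_eq_zero fun i _ => ?_
      rw [Matrix.mulVec_smul, hker, smul_zero]
    have hq1 : x ⬝ᵥ B₀.mulVec x = z ⬝ᵥ B₀.mulVec z := by
      nth_rewrite 1 [hxyz']
      nth_rewrite 1 [hxyz']
      rw [Matrix.mulVec_add, hB0y, zero_add, add_dotProduct]
      have : y ⬝ᵥ B₀.mulVec z = 0 := by
        rw [symdot B₀ hB₀sym, hB0y, dotProduct_zero]
      rw [this, zero_add]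
    have hBy : (B₁ t).mulVec y = ∑ j, c j • (B₁ t).mulVec (η j) := by
      rw [hydef, mulVec_sum']
      exact Finset.sum_congr rfl fun j _ => Matrix.mulVec_smul _ _ _
    have hq2 : y ⬝ᵥ (B₁ t).mulVec y = c ⬝ᵥ (G t).mulVec c := by
      nth_rewrite 1 [hydef]
      rw [sum_dotProduct']
      have hrow : ∀ i, η i ⬝ᵥ (B₁ t).mulVec y = ∑ j, c j * (G t i j) := by
        intro i
        rw [hBy, dotProduct_sum']
        exact Finset.sum_congr rfl fun j _ => by
          rw [dotProduct_smul, smul_eq_mul]; rfl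
      simp only [smul_dotProduct, smul_eq_mul, hrow]
      simp only [dotProduct, Matrix.mulVec, Finset.mul_sum]
      refine Finset.sum_congr rfl fun i _ => Finset.sum_congr rfl fun j _ => ?_
      show c i * (c j * G t i j) = c i * (G t i j * c j)
      ring
    have hray : c ⬝ᵥ (G t).mulVec c ≤ lamG t * (c ⬝ᵥ c) :=
      rayleigh_le (G t) (hGsym t) _ (hlamG t) c
    have hcross : 2 * (y ⬝ᵥ (B₁ t).mulVec z) ≤ N * ((y ⬝ᵥ y) / τ + τ * (z ⬝ᵥ z)) := by
      have h1 := dot_bound (B₁ t) y (τ • z)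
      have h2 : y ⬝ᵥ (B₁ t).mulVec (τ • z) = τ * (y ⬝ᵥ (B₁ t).mulVec z) := by
        rw [Matrix.mulVec_smul, dotProduct_smul, smul_eq_mul]
      have h3 : (τ • z) ⬝ᵥ (τ • z) = τ^2 * (z ⬝ᵥ z) := by
        rw [smul_dotProduct, dotProduct_smul, smul_eq_mul, smul_eq_mul]
        ring
      rw [h2, h3] at h1
      have h4 : τ * (y ⬝ᵥ (B₁ t).mulVec z) ≤ nB (B₁ t) * (((y ⬝ᵥ y) + τ^2 * (z ⬝ᵥ z)) / 2) :=
        le_trans (le_abs_self _) h1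
      have h5 : nB (B₁ t) * (((y ⬝ᵥ y) + τ^2 * (z ⬝ᵥ z)) / 2)
          ≤ N * (((y ⬝ᵥ y) + τ^2 * (z ⬝ᵥ z)) / 2) := by
        apply mul_le_mul_of_nonneg_right (hNt t ht)
        positivity
      have h6 : τ * (y ⬝ᵥ (B₁ t).mulVec z) ≤ N * (((y ⬝ᵥ y) + τ^2 * (z ⬝ᵥ z)) / 2) :=
        le_trans h4 h5
      rw [← sub_nonneg]
      rw [← sub_nonneg] at h6
      have h7 : N * ((y ⬝ᵥ y) / τ + τ * (z ⬝ᵥ z)) - 2 * (y ⬝ᵥ (B₁ t).mulVec z)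
          = (2 / τ) * (N * (((y ⬝ᵥ y) + τ^2 * (z ⬝ᵥ z)) / 2) - τ * (y ⬝ᵥ (B₁ t).mulVec z)) := by
        field_simp
      rw [h7]
      positivity
    have hzz : z ⬝ᵥ (B₁ t).mulVec z ≤ N * (z ⬝ᵥ z) := by
      have h1 := le_of_abs_le (dot_bound (B₁ t) z z)
      have h2 : nB (B₁ t) * (((z ⬝ᵥ z) + (z ⬝ᵥ z)) / 2) ≤ N * (z ⬝ᵥ z) := by
        have := hNt t ht
        nlinarith
      linarith
    have hsplit : x ⬝ᵥ (B₁ t).mulVec x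
        = y ⬝ᵥ (B₁ t).mulVec y + 2 * (y ⬝ᵥ (B₁ t).mulVec z) + z ⬝ᵥ (B₁ t).mulVec z := by
      nth_rewrite 1 [hxyz']
      nth_rewrite 1 [hxyz']
      rw [Matrix.mulVec_add, dotProduct_add, add_dotProduct,
        add_dotProduct, symdot (B₁ t) (hB₁sym t) z y]
      ring
    -- combine
    have hmain : lam1 g t * (x ⬝ᵥ x) ≤ (lamG t + ε) * (x ⬝ᵥ x) := by
      have h1 : lam1 g t * (x ⬝ᵥ x) = x ⬝ᵥ (g • B₀ + B₁ t).mulVec x := by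
        rw [hxe, dotProduct_smul, smul_eq_mul]
      have h2 : x ⬝ᵥ (g • B₀ + B₁ t).mulVec x
          = g * (x ⬝ᵥ B₀.mulVec x) + x ⬝ᵥ (B₁ t).mulVec x := by
        rw [Matrix.add_mulVec, dotProduct_add, Matrix.smul_mulVec,
          dotProduct_smul, smul_eq_mul]
      have hgapz := hgap z hzi
      have h3 : g * (x ⬝ᵥ B₀.mulVec x) ≤ -(g * μ) * (z ⬝ᵥ z) := by
        rw [hq1]
        nlinarith
      have h4 : y ⬝ᵥ (B₁ t).mulVec y ≤ lamG t * (y ⬝ᵥ y) := by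
        rw [hq2, hYc]
        exact hray
      have h5 : (N / τ) * (y ⬝ᵥ y) ≤ ε * (y ⬝ᵥ y) :=
        mul_le_mul_of_nonneg_right hNτ hY0
      have h6 : (-(g * μ) + N * τ + N) * (z ⬝ᵥ z) ≤ (lamG t + ε) * (z ⬝ᵥ z) := by
        apply mul_le_mul_of_nonneg_right _ hZ0
        have := hlamGlb t ht
        linarith
      have hcross' : 2 * (y ⬝ᵥ (B₁ t).mulVec z) ≤ (N / τ) * (y ⬝ᵥ y) + N * τ * (z ⬝ᵥ z) := by
        have : N * ((y ⬝ᵥ y) / τ + τ * (z ⬝ᵥ z)) = (N / τ) * (y ⬝ᵥ y) + N * τ * (z ⬝ᵥ z) := by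
          field_simp
        linarith [hcross]
      clear_value N L I ε τ c y z
      rw [h1, h2, hsplit, hxyz]
      have hexp : (lamG t + ε) * (y ⬝ᵥ y + z ⬝ᵥ z)
          = lamG t * (y ⬝ᵥ y) + ε * (y ⬝ᵥ y) + (lamG t + ε) * (z ⬝ᵥ z) := by ring
      have hexp2 : -(g * μ) * (z ⬝ᵥ z) + N * τ * (z ⬝ᵥ z) + N * (z ⬝ᵥ z)
          = (-(g * μ) + N * τ + N) * (z ⬝ᵥ z) := by ring
      linarith [h3, h4, h5, h6, hcross', hzz]
    exact le_of_mul_le_mul_right hmain ha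
  -- continuity of lam1 g
  have hAsym : ∀ s : ℝ, (g • B₀ + B₁ s)ᵀ = g • B₀ + B₁ s := by
    intro s
    rw [Matrix.transpose_add, Matrix.transpose_smul, hB₀sym, hB₁sym]
  have hlip : ∀ t s : ℝ, lam1 g t ≤ lam1 g s + nB (B₁ t - B₁ s) := by
    intro t s
    have h := lam_le (g • B₀ + B₁ t) (g • B₀ + B₁ s) (hAsym s) _ _ (hlam1 g t) (hlam1 g s)
    have hAA : (g • B₀ + B₁ t) - (g • B₀ + B₁ s) = B₁ t - B₁ s := by
      abel
    rwa [hAA] at h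
  have habs : ∀ t s : ℝ, |lam1 g t - lam1 g s| ≤ nB (B₁ t - B₁ s) := by
    intro t s
    rw [abs_sub_le_iff]
    constructor
    · linarith [hlip t s]
    · rw [nB_sub_comm]
      linarith [hlip s t]
  have hcont1 : Continuous (lam1 g) := by
    rw [continuous_iff_continuousAt]
    intro s
    have hf : Continuous fun t => nB (B₁ t - B₁ s) := nB_cont (hB₁cont.sub continuous_const)
    rw [Metric.continuousAt_iff]
    intro ε' hε'
    have h0 : Filter.Tendsto (fun t => nB (B₁ t - B₁ s)) (nhds s) (nhds 0) := by
      have := hf.continuousAt (x := s)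
      have hval : nB (B₁ s - B₁ s) = 0 := by
        simp [nB]
      rwa [ContinuousAt, hval] at this
    have hev := Metric.tendsto_nhds.mp h0 ε' hε'
    rw [Metric.eventually_nhds_iff] at hev
    obtain ⟨δ, hδ, hball⟩ := hev
    refine ⟨δ, hδ, fun {t} hts => ?_⟩
    have h1 := hball hts
    rw [Real.dist_eq, sub_zero, abs_of_nonneg (nB_nonneg _)] at h1
    rw [Real.dist_eq]
    exact lt_of_le_of_lt (habs t s) h1
  have hint1 : IntervalIntegrable (lam1 g) MeasureTheory.volume 0 1 :=
    hcont1.intervalIntegrable 0 1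
  have hintGε : IntervalIntegrable (fun t => lamG t + ε) MeasureTheory.volume 0 1 :=
    hintG.add intervalIntegrable_const
  have hmono : (∫ t in (0:ℝ)..1, lam1 g t) ≤ ∫ t in (0:ℝ)..1, (lamG t + ε) :=
    intervalIntegral.integral_mono_on (by norm_num) hint1 hintGε hpt
  have heq : (∫ t in (0:ℝ)..1, (lamG t + ε)) = I + ε := by
    rw [intervalIntegral.integral_add hintG intervalIntegrable_const,
      intervalIntegral.integral_const]
    simp [hIdef]
  have : I + ε = I / 2 := by
    rw [hεdef]
    ring
  calc (∫ t in (0:ℝ)..1, lam1 g t) ≤ I + ε := by rw [← heq]; exact hmono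
    _ = I / 2 := this
    _ < 0 := by linarith
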